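/- Let r, λ, x* > 0 and κ ∈ (0,1), and let h : (0,∞) → ℝ be continuous, bounded and twice differentiable. Suppose that for all 0 < x̃ < x*κ/(1 − κ): r(x̃ + x*)·x̃·h'(x̃) − λ(x̃ + x*)·h(x̃) + (λ/κ)·∫_{x*}^{x̃ + x*} h(u − x*) du + λx* − λ(1 − κ)x̃/κ = 0. Then for all 0 < x̃ < x*κ/(1 − κ): x̃(x̃ + x*)·h''(x̃) + ((2 − λ/r)·x̃ + x*(1 − λ/r))·h'(x̃) + (λ(1 − κ)/(rκ))·h(x̃) = λ(1 − κ)/(rκ). -/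

import Mathlib

open MeasureTheory

/-- Differentiating the insured generator equation on the lower region: if a bounded,
continuous, twice differentiable `h` satisfies
`r(x̃+x*)x̃ h'(x̃) − λ(x̃+x*)h(x̃) + (λ/κ)∫_{x*}^{x̃+x*} h(u−x*) du + λx* − λ(1−κ)x̃/κ = 0`
for all `0 < x̃ < x*κ/(1−κ)`, then for all such `x̃`,
`x̃(x̃+x*)h''(x̃) + ((2−λ/r)x̃ + x*(1−λ/r))h'(x̃) + (λ(1−κ)/(rκ))h(x̃) = λ(1−κ)/(rκ)`. -/
theorem stmt14 (r lam xstar κ : ℝ) (hr : 0 < r) (hlam : 0 < lam) (hxstar : 0 < xstar)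
    (hκ : κ ∈ Set.Ioo (0:ℝ) 1) (h : ℝ → ℝ)
    (hcont : ContinuousOn h (Set.Ioi 0))
    (hbdd : ∃ C : ℝ, ∀ x ∈ Set.Ioi (0:ℝ), |h x| ≤ C)
    (hd1 : ∀ x ∈ Set.Ioi (0:ℝ), DifferentiableAt ℝ h x)
    (hd2 : ∀ x ∈ Set.Ioi (0:ℝ), DifferentiableAt ℝ (deriv h) x)
    (hgen : ∀ x : ℝ, 0 < x → x < xstar * κ / (1 - κ) →
      r * (x + xstar) * x * deriv h x - lam * (x + xstar) * h x +
        (lam / κ) * (∫ u in xstar..(x + xstar), h (u - xstar)) +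
        lam * xstar - lam * (1 - κ) * x / κ = 0) :
    ∀ x : ℝ, 0 < x → x < xstar * κ / (1 - κ) →
      x * (x + xstar) * deriv (deriv h) x +
          ((2 - lam / r) * x + xstar * (1 - lam / r)) * deriv h x +
          (lam * (1 - κ) / (r * κ)) * h x =
        lam * (1 - κ) / (r * κ) := by
  obtain ⟨hκ0, hκ1⟩ := hκ
  obtain ⟨C, hC⟩ := hbdd
  intro x hx hxb
  have hxI : x ∈ Set.Ioi (0:ℝ) := hx
  set F : ℝ → ℝ := fun y =>
    r * (y + xstar) * y * deriv h y - lam * (y + xstar) * h y +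
      (lam / κ) * (∫ u in (0:ℝ)..y, h u) + lam * xstar - lam * (1 - κ) * y / κ with hFdef
  have hint_eq : ∀ y : ℝ, (∫ u in xstar..(y + xstar), h (u - xstar)) = ∫ u in (0:ℝ)..y, h u := by
    intro y
    rw [intervalIntegral.integral_comp_sub_right]
    norm_num
  -- F vanishes near x
  have hF0 : F =ᶠ[nhds x] (fun _ => (0:ℝ)) := by
    filter_upwards [isOpen_Ioo.mem_nhds (show x ∈ Set.Ioo 0 (xstar * κ / (1 - κ)) from ⟨hx, hxb⟩)]
      with y hy
    have hgy := hgen y hy.1 hy.2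
    rw [hint_eq] at hgy
    simpa [hFdef] using hgy
  -- integrability of h on [0, x]
  have hbound : ∀ᵐ y ∂(volume.restrict (Set.Ioc (0:ℝ) x)), ‖h y‖ ≤ C := by
    filter_upwards [ae_restrict_mem measurableSet_Ioc] with y hy
    simpa [Real.norm_eq_abs] using hC y (Set.Ioc_subset_Ioi_self hy)
  have hInt : IntervalIntegrable h volume 0 x := by
    rw [intervalIntegrable_iff_integrableOn_Ioc_of_le hx.le]
    exact ⟨(hcont.mono Set.Ioc_subset_Ioi_self).aestronglyMeasurable measurableSet_Ioc,
      HasFiniteIntegral.restrict_of_bounded (C := C) measure_Ioc_lt_top hbound⟩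
  have hmeasAt : StronglyMeasurableAtFilter h (nhds x) volume :=
    AEStronglyMeasurable.stronglyMeasurableAtFilter_of_mem
      (hcont.aestronglyMeasurable measurableSet_Ioi) (Ioi_mem_nhds hx)
  have hcx : ContinuousAt h x := hcont.continuousAt (Ioi_mem_nhds hx)
  have HI : HasDerivAt (fun y => ∫ u in (0:ℝ)..y, h u) (h x) x :=
    intervalIntegral.integral_hasDerivAt_right hInt hmeasAt hcx
  have Hh : HasDerivAt h (deriv h x) x := (hd1 x hxI).hasDerivAt
  have Hh2 : HasDerivAt (deriv h) (deriv (deriv h) x) x := (hd2 x hxI).hasDerivAt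
  -- derivative of each piece
  have ha : HasDerivAt (fun y : ℝ => r * (y + xstar) * y) (r * (2 * x + xstar)) x := by
    have := (((hasDerivAt_id x).add_const xstar).const_mul r).mul (hasDerivAt_id x)
    have e : r * (2 * x + xstar) = r * 1 * id x + r * (id x + xstar) * 1 := by simp only [id]; ring
    rw [e]; exact this
  have h1 : HasDerivAt (fun y => r * (y + xstar) * y * deriv h y)
      (r * (2 * x + xstar) * deriv h x + r * (x + xstar) * x * deriv (deriv h) x) x :=
    ha.mul Hh2
  have hb' : HasDerivAt (fun y : ℝ => lam * (y + xstar)) lam x := by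
    have := ((hasDerivAt_id x).add_const xstar).const_mul lam
    simpa using this
  have h2 : HasDerivAt (fun y => lam * (y + xstar) * h y)
      (lam * h x + lam * (x + xstar) * deriv h x) x := hb'.mul Hh
  have h3 : HasDerivAt (fun y => (lam / κ) * (∫ u in (0:ℝ)..y, h u)) ((lam / κ) * h x) x :=
    HI.const_mul (lam / κ)
  have h5 : HasDerivAt (fun y : ℝ => lam * (1 - κ) * y / κ) (lam * (1 - κ) / κ) x := by
    have := (hasDerivAt_id x).const_mul (lam * (1 - κ) / κ)
    have h' : HasDerivAt (fun y : ℝ => lam * (1 - κ) / κ * y) (lam * (1 - κ) / κ) x := by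
      simpa using this
    refine h'.congr_of_eventuallyEq ?_
    filter_upwards with y
    ring
  have HF : HasDerivAt F
      (r * (2 * x + xstar) * deriv h x + r * (x + xstar) * x * deriv (deriv h) x -
        (lam * h x + lam * (x + xstar) * deriv h x) + (lam / κ) * h x - lam * (1 - κ) / κ) x := by
    rw [hFdef]; exact (((h1.sub h2).add h3).add_const (lam * xstar)).sub h5
  have HF0 : HasDerivAt F 0 x := (hasDerivAt_const x (0:ℝ)).congr_of_eventuallyEq hF0
  have hD : r * (2 * x + xstar) * deriv h x + r * (x + xstar) * x * deriv (deriv h) x -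
      (lam * h x + lam * (x + xstar) * deriv h x) + (lam / κ) * h x - lam * (1 - κ) / κ = 0 :=
    HF.unique HF0
  have hκne : κ ≠ 0 := ne_of_gt hκ0
  have hrne : r ≠ 0 := ne_of_gt hr
  have key : r * (x * (x + xstar) * deriv (deriv h) x +
          ((2 - lam / r) * x + xstar * (1 - lam / r)) * deriv h x +
          (lam * (1 - κ) / (r * κ)) * h x - lam * (1 - κ) / (r * κ)) = 0 := by
    have e1 : r * (lam / r) = lam := by field_simp
    have e2 : r * (lam * (1 - κ) / (r * κ)) = lam * (1 - κ) / κ := by field_simp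
    have e3 : κ * κ⁻¹ = 1 := mul_inv_cancel₀ hκne
    linear_combination hD - (x + xstar) * deriv h x * e1 + (h x - 1) * e2 - lam * h x * e3
  rcases mul_eq_zero.mp key with h0 | h0
  · exact absurd h0 hrne
  · linarith
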